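/- In the setting of the BPDCAe decrease inequality, suppose additionally $0<\lambda L<1$, $\rho\in[0,1)$ with $D_h(x^k,y^k)\leq\rho D_h(x^{k-1},x^k)$, and $\frac{\rho}{\lambda}\leq M\leq\frac{1}{\lambda}$. Then with $H_M(x,y)=\Psi(x)+M D_h(y,x)$, one has $H_M(x^{k+1},x^k)\leq H_M(x^k,x^{k-1})-\left(\frac{1}{\lambda}-M\right)D_h(x^k,x^{k+1})-\left(M-\frac{\rho}{\lambda}\right)D_h(x^{k-1},x^k)-\left(\frac{1}{\lambda}-L\right)D_h(x^{k+1},y^k)$; in particular $H_M(x^{k+1},x^k)\leq H_M(x^k,x^{k-1})$. -/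

import Mathlib

open RealInnerProductSpace
set_option maxHeartbeats 1000000

private lemma grad_slope_tendsto {d : ℕ} {f : EuclideanSpace ℝ (Fin d) → ℝ}
    {f' x : EuclideanSpace ℝ (Fin d)} (hf : HasGradientAt f f' x)
    (v : EuclideanSpace ℝ (Fin d)) :
    Filter.Tendsto (fun t : ℝ => (f (x + t • v) - f x) / t)
      (nhdsWithin 0 (Set.Ioi 0)) (nhds ⟪f', v⟫) := by
  have hline : HasDerivAt (fun t : ℝ => x + t • v) v 0 := by
    simpa using ((hasDerivAt_id (0:ℝ)).smul_const v).const_add x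
  have hcomp : HasDerivAt (fun t : ℝ => f (x + t • v)) ⟪f', v⟫ 0 := by
    have hf2 : HasFDerivAt f ((InnerProductSpace.toDual ℝ (EuclideanSpace ℝ (Fin d))) f') (x + (0:ℝ) • v) := by simpa using hf.hasFDerivAt
    have h1 := hf2.comp_hasDerivAt 0 hline
    exact h1
  have h2 := hasDerivAt_iff_tendsto_slope.mp hcomp
  have h3 : Filter.Tendsto (slope (fun t : ℝ => f (x + t • v)) 0)
      (nhdsWithin 0 (Set.Ioi 0)) (nhds ⟪f', v⟫) :=
    h2.mono_left (nhdsWithin_mono 0 (fun t ht => Set.mem_compl_singleton_iff.mpr (ne_of_gt ht)))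
  refine h3.congr (fun t => ?_)
  simp [slope_def_field]

private lemma grad_ineq {d : ℕ} {f : EuclideanSpace ℝ (Fin d) → ℝ}
    {f' x : EuclideanSpace ℝ (Fin d)} (hf : HasGradientAt f f' x)
    (hc : ConvexOn ℝ Set.univ f) (y : EuclideanSpace ℝ (Fin d)) :
    f x + ⟪f', y - x⟫ ≤ f y := by
  have ht := grad_slope_tendsto hf (y - x)
  have hev : ∀ᶠ t in nhdsWithin (0:ℝ) (Set.Ioi 0),
      (f (x + t • (y - x)) - f x) / t ≤ f y - f x := by
    filter_upwards [Ioc_mem_nhdsGT_of_mem (Set.left_mem_Ico.mpr one_pos)] with t htm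
    obtain ⟨ht0, ht1⟩ := htm
    have hpt : (1 - t) • x + t • y = x + t • (y - x) := by module
    have hcv := hc.2 (Set.mem_univ x) (Set.mem_univ y) (by linarith : (0:ℝ) ≤ 1 - t) ht0.le (by ring)
    rw [hpt, smul_eq_mul, smul_eq_mul] at hcv
    rw [div_le_iff₀ ht0]
    nlinarith [hcv]
  have := le_of_tendsto ht hev
  linarith


/-- Decrease of the auxiliary function `H_M` for BPDCAe under the adaptive
restart condition. -/
theorem bpdcae_aux_decrease (d : ℕ)
    (g f₁ f₂ h : EuclideanSpace ℝ (Fin d) → ℝ)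
    (f₁' h' : EuclideanSpace ℝ (Fin d) → EuclideanSpace ℝ (Fin d))
    (hf₁ : ∀ x, HasGradientAt f₁ (f₁' x) x)
    (hh : ∀ x, HasGradientAt h (h' x) x)
    (hgconv : ConvexOn ℝ Set.univ g)
    (hf₁conv : ConvexOn ℝ Set.univ f₁)
    (hf₂conv : ConvexOn ℝ Set.univ f₂)
    (hhconv : ConvexOn ℝ Set.univ h)
    (L : ℝ) (hL : 0 < L)
    (hsmad : ConvexOn ℝ Set.univ (fun x => L * h x - f₁ x))
    (D : EuclideanSpace ℝ (Fin d) → EuclideanSpace ℝ (Fin d) → ℝ)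
    (hD : ∀ x y, D x y = h x - h y - ⟪h' y, x - y⟫)
    (Ψ : EuclideanSpace ℝ (Fin d) → ℝ)
    (hΨ : ∀ x, Ψ x = f₁ x - f₂ x + g x)
    (lam : ℝ) (hlam : 0 < lam) (hlamL : lam * L < 1)
    (βk : ℝ) (hβk : 0 ≤ βk) (hβk1 : βk < 1)
    (xkm xk yk ξk xkp : EuclideanSpace ℝ (Fin d))
    (hyk : yk = xk + βk • (xk - xkm))
    (hξk : ∀ y, f₂ y ≥ f₂ xk + ⟪ξk, y - xk⟫)
    (hmin : ∀ y, g xkp + ⟪f₁' yk - ξk, xkp - yk⟫ + (1 / lam) * D xkp yk ≤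
      g y + ⟪f₁' yk - ξk, y - yk⟫ + (1 / lam) * D y yk)
    (ρ : ℝ) (hρ : 0 ≤ ρ) (hρ1 : ρ < 1)
    (hrestart : D xk yk ≤ ρ * D xkm xk)
    (M : ℝ) (hM1 : ρ / lam ≤ M) (hM2 : M ≤ 1 / lam)
    (H : EuclideanSpace ℝ (Fin d) → EuclideanSpace ℝ (Fin d) → ℝ)
    (hH : ∀ x y, H x y = Ψ x + M * D y x) :
    H xkp xk ≤ H xk xkm - (1 / lam - M) * D xk xkp -
        (M - ρ / lam) * D xkm xk - (1 / lam - L) * D xkp yk ∧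
      H xkp xk ≤ H xk xkm := by
  -- nonnegativity of the Bregman distance
  have hDnn : ∀ a b, 0 ≤ D a b := by
    intro a b
    have := grad_ineq (hh b) hhconv a
    rw [hD]; linarith
  -- descent lemma from L-smad
  have hgradS : HasGradientAt (fun x => L * h x - f₁ x) (L • h' yk - f₁' yk) yk := by
    have h1 : HasFDerivAt (fun x => L * h x - f₁ x)
        (L • ((InnerProductSpace.toDual ℝ (EuclideanSpace ℝ (Fin d))) (h' yk))
          - ((InnerProductSpace.toDual ℝ (EuclideanSpace ℝ (Fin d))) (f₁' yk))) yk :=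
      ((hh yk).hasFDerivAt.const_mul L).sub (hf₁ yk).hasFDerivAt
    have h2 : (InnerProductSpace.toDual ℝ (EuclideanSpace ℝ (Fin d))) (L • h' yk - f₁' yk)
        = L • ((InnerProductSpace.toDual ℝ (EuclideanSpace ℝ (Fin d))) (h' yk))
          - ((InnerProductSpace.toDual ℝ (EuclideanSpace ℝ (Fin d))) (f₁' yk)) := by
      simp [map_sub, map_smul]
    exact hasGradientAt_iff_hasFDerivAt.mpr (h2 ▸ h1)
  have hBs := grad_ineq hgradS hsmad xkp
  simp only [inner_sub_left, real_inner_smul_left] at hBs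
  have hB : f₁ xkp ≤ f₁ yk + ⟪f₁' yk, xkp - yk⟫ + L * D xkp yk := by
    rw [hD]; linarith
  -- convexity of f₁
  have hf1c := grad_ineq (hf₁ yk) hf₁conv xk
  -- subgradient of f₂
  have hf2s := hξk xkp
  -- three point inequality from the minimization step
  have claim3 : g xkp + ⟪f₁' yk - ξk, xkp - yk⟫ + (1 / lam) * D xkp yk
      + (1 / lam) * D xk xkp ≤ g xk + ⟪f₁' yk - ξk, xk - yk⟫ + (1 / lam) * D xk yk := by
    have hslope := grad_slope_tendsto (hh xkp) (xk - xkp)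
    have htend : Filter.Tendsto
        (fun t : ℝ => (1 / lam) * (h xk - h xkp - (h (xkp + t • (xk - xkp)) - h xkp) / t))
        (nhdsWithin 0 (Set.Ioi 0))
        (nhds ((1 / lam) * (h xk - h xkp - ⟪h' xkp, xk - xkp⟫))) :=
      (Filter.Tendsto.const_sub _ hslope).const_mul _
    have hev : ∀ᶠ t in nhdsWithin (0 : ℝ) (Set.Ioi 0),
        (1 / lam) * (h xk - h xkp - (h (xkp + t • (xk - xkp)) - h xkp) / t)
          ≤ (g xk + ⟪f₁' yk - ξk, xk - yk⟫ + (1 / lam) * D xk yk)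
            - (g xkp + ⟪f₁' yk - ξk, xkp - yk⟫ + (1 / lam) * D xkp yk) := by
      filter_upwards [Ioc_mem_nhdsGT_of_mem (Set.left_mem_Ico.mpr one_pos)] with t htm
      obtain ⟨ht0, ht1⟩ := htm
      have h1 := hmin (xkp + t • (xk - xkp))
      have e1 : ⟪f₁' yk - ξk, xkp + t • (xk - xkp) - yk⟫
          = ⟪f₁' yk - ξk, xkp - yk⟫
            + t * (⟪f₁' yk - ξk, xk - yk⟫ - ⟪f₁' yk - ξk, xkp - yk⟫) := by
        have hp : xkp + t • (xk - xkp) - yk = (xkp - yk) + t • ((xk - yk) - (xkp - yk)) := by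
          module
        rw [hp]
        simp only [inner_add_right, inner_sub_right, real_inner_smul_right]
      have e2 : ⟪h' yk, xkp + t • (xk - xkp) - yk⟫
          = ⟪h' yk, xkp - yk⟫ + t * (⟪h' yk, xk - yk⟫ - ⟪h' yk, xkp - yk⟫) := by
        have hp : xkp + t • (xk - xkp) - yk = (xkp - yk) + t • ((xk - yk) - (xkp - yk)) := by
          module
        rw [hp]
        simp only [inner_add_right, inner_sub_right, real_inner_smul_right]
      have h2' : g (xkp + t • (xk - xkp)) ≤ (1 - t) * g xkp + t * g xk := by
        have hpt : (1 - t) • xkp + t • xk = xkp + t • (xk - xkp) := by module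
        have := hgconv.2 (Set.mem_univ xkp) (Set.mem_univ xk)
          (by linarith : (0:ℝ) ≤ 1 - t) ht0.le (by ring)
        rw [hpt, smul_eq_mul, smul_eq_mul] at this
        exact this
      simp only [hD] at h1 ⊢
      rw [e1, e2] at h1
      have heq : (1 / lam) * (h xk - h xkp - (h (xkp + t • (xk - xkp)) - h xkp) / t)
          = ((1 / lam) * (t * (h xk - h xkp) - (h (xkp + t • (xk - xkp)) - h xkp))) / t := by
        field_simp
      rw [heq, div_le_iff₀ ht0]
      nlinarith [h1, h2']
    have hfin := le_of_tendsto htend hev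
    rw [hD xk xkp]
    linarith [hfin]
  have hres2 : (1 / lam) * D xk yk ≤ ρ / lam * D xkm xk := by
    calc (1 / lam) * D xk yk ≤ (1 / lam) * (ρ * D xkm xk) :=
          mul_le_mul_of_nonneg_left hrestart (by positivity)
      _ = ρ / lam * D xkm xk := by ring
  have eξ : ⟪ξk, xkp - xk⟫ = ⟪ξk, xkp - yk⟫ - ⟪ξk, xk - yk⟫ := by
    have hp : xkp - xk = (xkp - yk) - (xk - yk) := by module
    rw [hp, inner_sub_right]
  have ec1 : ⟪f₁' yk - ξk, xkp - yk⟫ = ⟪f₁' yk, xkp - yk⟫ - ⟪ξk, xkp - yk⟫ :=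
    inner_sub_left _ _ _
  have ec2 : ⟪f₁' yk - ξk, xk - yk⟫ = ⟪f₁' yk, xk - yk⟫ - ⟪ξk, xk - yk⟫ :=
    inner_sub_left _ _ _
  have hmain : H xkp xk ≤ H xk xkm - (1 / lam - M) * D xk xkp -
      (M - ρ / lam) * D xkm xk - (1 / lam - L) * D xkp yk := by
    rw [hH, hH, hΨ, hΨ]
    linarith [hB, hf1c, hf2s, claim3, hres2, eξ, ec1, ec2]
  refine ⟨hmain, ?_⟩
  have h1 : 0 ≤ (1 / lam - M) * D xk xkp :=
    mul_nonneg (by linarith) (hDnn _ _)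
  have h2 : 0 ≤ (M - ρ / lam) * D xkm xk :=
    mul_nonneg (by linarith) (hDnn _ _)
  have h3 : 0 ≤ (1 / lam - L) * D xkp yk := by
    have hL' : L ≤ 1 / lam := by
      rw [le_div_iff₀ hlam]; nlinarith
    exact mul_nonneg (by linarith) (hDnn _ _)
  linarith [hmain, h1, h2, h3]
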